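/- The language of all square-free words over an alphabet Σ with |Σ| ≥ 3 is not context-free, assuming it is infinite. -/

import Mathlib

namespace SqFreeCF

open ContextFreeGrammar

variable {T : Type}

/-- Parse trees. -/
inductive PT (T N : Type) : Type
  | leaf (t : T) : PT T N
  | node (n : N) (c : List (PT T N)) : PT T N

namespace PT
variable {N : Type}

def rootSym : PT T N → Symbol T N
  | .leaf t => .terminal t
  | .node n _ => .nonterminal n

def size : PT T N → ℕ
  | .leaf _ => 1
  | .node _ c => 1 + (c.attach.map (fun q => size q.1)).sum
decreasing_by have := List.sizeOf_lt_of_mem q.2; simp; omega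

def yield : PT T N → List T
  | .leaf t => [t]
  | .node _ c => (c.attach.map (fun q => yield q.1)).flatten
decreasing_by have := List.sizeOf_lt_of_mem q.2; simp; omega

lemma size_node (n : N) (c : List (PT T N)) :
    (PT.node n c).size = 1 + (c.map size).sum := by
  rw [size, List.map_attach_eq_pmap]; simp

lemma yield_node (n : N) (c : List (PT T N)) :
    (PT.node n c).yield = (c.map yield).flatten := by
  rw [yield, List.map_attach_eq_pmap]; simp

@[simp] lemma yield_leaf (t : T) : (PT.leaf t : PT T N).yield = [t] := by rw [yield]

end PT

variable {g : ContextFreeGrammar.{0} T}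

/-- Valid parse trees for a grammar. -/
inductive Good (g : ContextFreeGrammar.{0} T) : PT T g.NT → Prop
  | leaf (t : T) : Good g (.leaf t)
  | node (r : ContextFreeRule T g.NT) (hr : r ∈ g.rules) (c : List (PT T g.NT))
      (hc : ∀ q ∈ c, Good g q) (hout : r.output = c.map PT.rootSym) :
      Good g (.node r.input c)

abbrev mapT (w : List T) : List (Symbol T g.NT) := w.map Symbol.terminal

lemma derives_yield_aux (c : List (PT T g.NT))
    (h : ∀ q ∈ c, g.Derives [q.rootSym] (q.yield.map Symbol.terminal)) :
    g.Derives (c.map PT.rootSym) ((c.map PT.yield).flatten.map Symbol.terminal) := by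
  induction c with
  | nil => simp; rfl
  | cons q c ih =>
    have h1 := (h q (by simp)).append_right (c.map PT.rootSym)
    have h2 := (ih (fun q hq => h q (by simp [hq]))).append_left (q.yield.map Symbol.terminal)
    simp only [List.map_cons, List.flatten_cons, List.map_append]
    exact (by simpa using h1 : g.Derives (q.rootSym :: c.map PT.rootSym) _).trans h2

lemma derives_yield {p : PT T g.NT} (hp : Good g p) :
    g.Derives [p.rootSym] (p.yield.map Symbol.terminal) := by
  induction hp with
  | leaf t => simp [PT.rootSym]; rfl
  | node r hr c hc hout ih =>
    have step : g.Produces [PT.rootSym (.node r.input c)] (c.map PT.rootSym) := by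
      refine ⟨r, hr, ?_⟩
      rw [PT.rootSym, ← hout]
      exact ContextFreeRule.Rewrites.input_output
    refine step.trans_derives ?_
    rw [PT.yield_node]
    exact derives_yield_aux c ih

lemma trees_of_derives {s : List (Symbol T g.NT)} {w : List T}
    (h : g.Derives s (w.map Symbol.terminal)) :
    ∃ c : List (PT T g.NT), (∀ q ∈ c, Good g q) ∧ c.map PT.rootSym = s ∧
      (c.map PT.yield).flatten = w := by
  induction h using Relation.ReflTransGen.head_induction_on with
  | refl =>
    refine ⟨w.map PT.leaf, ?_, ?_, ?_⟩
    · intro q hq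
      simp only [List.mem_map] at hq
      obtain ⟨t, _, rfl⟩ := hq
      exact Good.leaf t
    · simp [List.map_map, PT.rootSym]
    · induction w with
      | nil => simp
      | cons a w ih => simpa using ih
  | head hp _ ih =>
    obtain ⟨r, hr, hrw⟩ := hp
    obtain ⟨p, q, rfl, rfl⟩ := hrw.exists_parts
    obtain ⟨c, hgood, hroot, hyield⟩ := ih
    rw [List.append_assoc, List.map_eq_append_iff] at hroot
    obtain ⟨c1, c23, rfl, hc1, hc23⟩ := hroot
    rw [List.map_eq_append_iff] at hc23
    obtain ⟨c2, c3, rfl, hc2, hc3⟩ := hc23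
    refine ⟨c1 ++ [PT.node r.input c2] ++ c3, ?_, ?_, ?_⟩
    · intro q' hq'
      simp only [List.append_assoc, List.mem_append, List.mem_singleton] at hq'
      rcases hq' with h1 | h1 | h1
      · exact hgood _ (by simp [h1])
      · subst h1
        exact Good.node r hr c2 (fun q' hq' => hgood _ (by simp [hq'])) hc2.symm
      · exact hgood _ (by simp [h1])
    · simp [hc1, hc3, PT.rootSym]
    · rw [← hyield]
      simp [PT.yield_node]

lemma tree_of_mem_language {w : List T} (h : w ∈ g.language) :
    ∃ p : PT T g.NT, Good g p ∧ p.rootSym = Symbol.nonterminal g.initial ∧ p.yield = w := by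
  obtain ⟨c, hgood, hroot, hyield⟩ := trees_of_derives (g := g) h
  have hl : c.length = 1 := by simpa using congrArg List.length hroot
  obtain ⟨p, rfl⟩ := List.length_eq_one_iff.mp hl
  refine ⟨p, hgood p (by simp), by simpa using hroot, by simpa using hyield⟩

/-- `ChildOf q p`: `q` is an immediate subtree of `p`. -/
def ChildOf (q p : PT T g.NT) : Prop := ∃ n c, p = PT.node n c ∧ q ∈ c

lemma Good.of_child {p q : PT T g.NT} (hp : Good g p) (h : ChildOf (g := g) q p) : Good g q := by
  obtain ⟨n, c, rfl, hq⟩ := h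
  cases hp with
  | node r hr c hc hout => exact hc q hq

lemma size_lt_of_child {p q : PT T g.NT} (h : ChildOf (g := g) q p) : q.size < p.size := by
  obtain ⟨n, c, rfl, hq⟩ := h
  rw [PT.size_node]
  have : q.size ≤ (c.map PT.size).sum := List.le_sum_of_mem (List.mem_map_of_mem hq)
  omega

lemma size_lt_of_desc {p q : PT T g.NT} (h : Relation.TransGen (ChildOf (g := g)) q p) :
    q.size < p.size := by
  induction h with
  | single h => exact size_lt_of_child h
  | tail _ h ih => exact ih.trans (size_lt_of_child h)

lemma deriv_of_child {p q : PT T g.NT} (h : ChildOf (g := g) q p) (hp : Good g p) :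
    ∃ u y : List T, g.Derives [p.rootSym]
        (u.map Symbol.terminal ++ [q.rootSym] ++ y.map Symbol.terminal) ∧
      p.yield = u ++ q.yield ++ y := by
  obtain ⟨n, c, rfl, hq⟩ := h
  obtain ⟨c1, c2, rfl⟩ := List.append_of_mem hq
  cases hp with
  | node r hr _ hc hout =>
    refine ⟨(c1.map PT.yield).flatten, (c2.map PT.yield).flatten, ?_, ?_⟩
    · have step : g.Produces [PT.rootSym (.node r.input (c1 ++ q :: c2))]
          (c1.map PT.rootSym ++ [q.rootSym] ++ c2.map PT.rootSym) := by
        refine ⟨r, hr, ?_⟩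
        have : r.output = c1.map PT.rootSym ++ [q.rootSym] ++ c2.map PT.rootSym := by
          simpa using hout
        rw [PT.rootSym, ← this]
        exact ContextFreeRule.Rewrites.input_output
      refine step.trans_derives ?_
      have h1 := (derives_yield_aux c1 (fun q' hq' => derives_yield (hc q' (by simp [hq']))))
      have h2 := (derives_yield_aux c2 (fun q' hq' => derives_yield (hc q' (by simp [hq']))))
      have h1' := h1.append_right ([q.rootSym] ++ c2.map PT.rootSym)
      have h2' := h2.append_left ((c1.map PT.yield).flatten.map Symbol.terminal ++ [q.rootSym])
      have h1'' : g.Derives (c1.map PT.rootSym ++ [q.rootSym] ++ c2.map PT.rootSym)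
          ((c1.map PT.yield).flatten.map Symbol.terminal ++ [q.rootSym] ++ c2.map PT.rootSym) := by
        simpa [List.append_assoc] using h1'
      have h2'' : g.Derives
          ((c1.map PT.yield).flatten.map Symbol.terminal ++ [q.rootSym] ++ c2.map PT.rootSym)
          ((c1.map PT.yield).flatten.map Symbol.terminal ++ [q.rootSym] ++
            (c2.map PT.yield).flatten.map Symbol.terminal) := by
        simpa [List.append_assoc] using h2'
      exact h1''.trans h2''
    · rw [PT.yield_node]; simp

lemma deriv_of_desc {p q : PT T g.NT} (h : Relation.TransGen (ChildOf (g := g)) q p)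
    (hp : Good g p) :
    ∃ u y : List T, g.Derives [p.rootSym]
        (u.map Symbol.terminal ++ [q.rootSym] ++ y.map Symbol.terminal) ∧
      p.yield = u ++ q.yield ++ y := by
  induction h with
  | single h => exact deriv_of_child h hp
  | tail hqb hbp ih =>
    rename_i b p'
    obtain ⟨u, y, hder, hyd⟩ := deriv_of_child hbp hp
    obtain ⟨u', y', hder', hyd'⟩ := ih (hp.of_child hbp)
    refine ⟨u ++ u', y' ++ y, ?_, ?_⟩
    · refine hder.trans ?_
      have := (hder'.append_left (u.map Symbol.terminal)).append_right (y.map Symbol.terminal)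
      simpa [List.append_assoc] using this
    · rw [hyd, hyd']; simp
lemma replace_child {p q q' : PT T g.NT} (h : ChildOf (g := g) q p) (hp : Good g p)
    (hq' : Good g q') (hroot : q'.rootSym = q.rootSym) (hyield : q'.yield = q.yield)
    (hsize : q'.size < q.size) :
    ∃ p' : PT T g.NT, Good g p' ∧ p'.rootSym = p.rootSym ∧ p'.yield = p.yield ∧
      p'.size < p.size := by
  obtain ⟨n, c, rfl, hq⟩ := h
  obtain ⟨c1, c2, rfl⟩ := List.append_of_mem hq
  cases hp with
  | node r hr _ hc hout =>
    refine ⟨PT.node r.input (c1 ++ q' :: c2), ?_, rfl, ?_, ?_⟩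
    · refine Good.node r hr _ ?_ ?_
      · intro x hx
        simp only [List.mem_append, List.mem_cons] at hx
        rcases hx with hx | hx | hx
        · exact hc x (by simp [hx])
        · exact hx ▸ hq'
        · exact hc x (by simp [hx])
      · rw [hout]; simp [hroot]
    · rw [PT.yield_node, PT.yield_node]; simp [hyield]
    · rw [PT.size_node, PT.size_node]; simp; omega

lemma replace_desc {p q : PT T g.NT} (h : Relation.TransGen (ChildOf (g := g)) q p)
    (hp : Good g p) :
    ∀ q' : PT T g.NT, Good g q' → q'.rootSym = q.rootSym → q'.yield = q.yield →
      q'.size < q.size →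
    ∃ p' : PT T g.NT, Good g p' ∧ p'.rootSym = p.rootSym ∧ p'.yield = p.yield ∧
      p'.size < p.size := by
  induction h with
  | single h => exact fun q' h1 h2 h3 h4 => replace_child h hp h1 h2 h3 h4
  | tail hqb hbp ih =>
    intro q' h1 h2 h3 h4
    obtain ⟨b', hb1, hb2, hb3, hb4⟩ := ih (hp.of_child hbp) q' h1 h2 h3 h4
    exact replace_child hbp hp hb1 hb2 hb3 hb4
/-- Bound on the branching of the grammar. -/
noncomputable def Mg (g : ContextFreeGrammar.{0} T) : ℕ :=
  max (g.rules.sup fun r => r.output.length) 1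

lemma one_le_Mg : 1 ≤ Mg g := le_max_right _ _

lemma yield_len_node {n : g.NT} {c : List (PT T g.NT)} :
    (PT.node n c).yield.length = (c.map (fun q => q.yield.length)).sum := by
  rw [PT.yield_node, List.length_flatten]
  simp [List.map_map, Function.comp_def]

lemma chain_lemma : ∀ (d : ℕ) (p : PT T g.NT), Good g p → Mg g ^ d < p.yield.length →
    ∃ l : List (PT T g.NT), l.length = d ∧
      List.Chain' (fun a b => ChildOf (g := g) b a) (p :: l) ∧
      ∀ q ∈ p :: l, Good g q ∧ 1 < q.yield.length := by
  intro d
  induction d with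
  | zero =>
    intro p hp hlen
    exact ⟨[], rfl, List.isChain_singleton p, by
      intro q hq; simp at hq; subst hq; exact ⟨hp, by simpa using hlen⟩⟩
  | succ d ih =>
    intro p hp hlen
    have h1lt : 1 < p.yield.length := by
      have : 1 ≤ Mg g ^ (d + 1) := Nat.one_le_pow _ _ (lt_of_lt_of_le one_pos one_le_Mg)
      omega
    cases p with
    | leaf t => simp at h1lt
    | node n c =>
      cases hp with
      | node r hr _ hc hout =>
        have hex : ∃ q ∈ c, Mg g ^ d < q.yield.length := by
          by_contra hno
          push_neg at hno
          have hsum : ((c.map (fun q => q.yield.length)).sum : ℕ) ≤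
              c.length * Mg g ^ d := by
            have := List.sum_le_card_nsmul (c.map (fun q => q.yield.length)) (Mg g ^ d)
              (by
                intro x hx
                simp only [List.mem_map] at hx
                obtain ⟨q, hq, rfl⟩ := hx
                exact hno q hq)
            simpa [smul_eq_mul] using this
          have hclen : c.length ≤ Mg g := by
            have h1 : r.output.length = c.length := by rw [hout]; simp
            have h2 : r.output.length ≤ g.rules.sup (fun r => r.output.length) :=
              Finset.le_sup (f := fun r => r.output.length) hr
            exact le_trans (h1 ▸ h2) (le_max_left _ _)
          have : (PT.node r.input c).yield.length ≤ Mg g ^ (d + 1) := by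
            rw [yield_len_node]
            calc _ ≤ c.length * Mg g ^ d := hsum
              _ ≤ Mg g * Mg g ^ d := Nat.mul_le_mul_right _ hclen
              _ = Mg g ^ (d + 1) := by ring
          omega
        obtain ⟨q, hq, hqlen⟩ := hex
        obtain ⟨l, hl1, hl2, hl3⟩ := ih q (hc q hq) hqlen
        refine ⟨q :: l, by simp [hl1], ?_, ?_⟩
        · rw [List.Chain', List.isChain_cons_cons]
          exact ⟨⟨r.input, c, rfl, hq⟩, hl2⟩
        · intro x hx
          rcases List.mem_cons.mp hx with rfl | hx
          · exact ⟨Good.node r hr c hc hout, h1lt⟩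
          · exact hl3 x hx
lemma dup_of_long {β γ : Type*} {R : β → β → Prop} {f : β → γ} :
    ∀ (l : List β) (S : Finset γ), List.Pairwise R l → (∀ a ∈ l, f a ∈ S) →
      S.card < l.length → ∃ a b, a ∈ l ∧ b ∈ l ∧ R a b ∧ f a = f b := by
  classical
  intro l
  induction l with
  | nil => intro S _ _ h; simp at h
  | cons a t ih =>
    intro S hpw hmem hcard
    by_cases hfa : f a ∈ t.map f
    · obtain ⟨b, hb, hfb⟩ := List.mem_map.mp hfa
      exact ⟨a, b, by simp, by simp [hb], (List.pairwise_cons.mp hpw).1 b hb, hfb.symm⟩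
    · have hmem' : ∀ x ∈ t, f x ∈ S.erase (f a) := by
        intro x hx
        refine Finset.mem_erase.mpr ⟨?_, hmem x (by simp [hx])⟩
        intro heq
        exact hfa (heq ▸ List.mem_map_of_mem (f := f) hx)
      have hcard' : (S.erase (f a)).card < t.length := by
        have h1 : f a ∈ S := hmem a (by simp)
        have h2 : 0 < S.card := Finset.card_pos.mpr ⟨f a, h1⟩
        have := Finset.card_erase_of_mem h1
        simp only [List.length_cons] at hcard
        omega
      obtain ⟨x, y, hx, hy, hR, hf⟩ := ih (S.erase (f a)) (List.pairwise_cons.mp hpw).2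
        hmem' hcard'
      exact ⟨x, y, by simp [hx], by simp [hy], hR, hf⟩

def label {N : Type} : PT T N → Option N
  | .leaf _ => none
  | .node n _ => some n

lemma pump_exists {w : List T} (hw : w ∈ g.language)
    (hlen : Mg g ^ g.rules.card < w.length) :
    ∃ (A : g.NT) (u v w' x y : List T),
      g.Derives [Symbol.nonterminal g.initial]
        (u.map Symbol.terminal ++ [Symbol.nonterminal A] ++ y.map Symbol.terminal) ∧
      g.Derives [Symbol.nonterminal A]
        (v.map Symbol.terminal ++ [Symbol.nonterminal A] ++ x.map Symbol.terminal) ∧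
      g.Derives [Symbol.nonterminal A] (w'.map Symbol.terminal) ∧
      (v ≠ [] ∨ x ≠ []) := by
  classical
  -- minimal tree
  have hne : ∃ n, ∃ p : PT T g.NT, Good g p ∧ p.rootSym = Symbol.nonterminal g.initial ∧
      p.yield = w ∧ p.size = n := by
    obtain ⟨p, h1, h2, h3⟩ := tree_of_mem_language hw
    exact ⟨p.size, p, h1, h2, h3, rfl⟩
  obtain ⟨p0, hp0good, hp0root, hp0yield, hp0size⟩ := Nat.sInf_mem hne
  have hminimal : ∀ p' : PT T g.NT, Good g p' → p'.rootSym = Symbol.nonterminal g.initial →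
      p'.yield = w → p0.size ≤ p'.size := by
    intro p' h1 h2 h3
    rw [hp0size]
    exact Nat.sInf_le ⟨p', h1, h2, h3, rfl⟩
  -- chain
  obtain ⟨l, hl1, hl2, hl3⟩ := chain_lemma g.rules.card p0 hp0good (hp0yield ▸ hlen)
  -- pairwise descendants
  set R' : PT T g.NT → PT T g.NT → Prop :=
    fun a b => Relation.TransGen (fun u v => ChildOf (g := g) v u) a b with hR'
  letI : IsTrans (PT T g.NT) R' := ⟨fun a b c hab hbc => hab.trans hbc⟩
  have hpw : List.Pairwise R' (p0 :: l) := by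
    rw [← List.isChain_iff_pairwise]
    exact hl2.imp (fun a b h => Relation.TransGen.single h)
  -- every element is a node with label in the image
  set S : Finset (Option g.NT) := g.rules.image (fun r => some r.input) with hS
  have hlab : ∀ a ∈ p0 :: l, label a ∈ S := by
    intro a ha
    obtain ⟨hgood, hlen1⟩ := hl3 a ha
    cases a with
    | leaf t => simp at hlen1
    | node n c =>
      cases hgood with
      | node r hr _ _ _ => exact Finset.mem_image_of_mem _ hr
  have hcard : S.card < (p0 :: l).length := by
    have h2 : S.card ≤ g.rules.card := Finset.card_image_le
    rw [List.length_cons, hl1]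
    omega
  obtain ⟨a, b, hamem, hbmem, hRab', hfab⟩ := dup_of_long (p0 :: l) S hpw hlab hcard
  have hRab : Relation.TransGen (ChildOf (g := g)) b a := Relation.transGen_swap.mp hRab'
  -- both are nodes with the same nonterminal A
  have hanode : ∃ A, a.rootSym = Symbol.nonterminal A ∧ label a = some A := by
    cases a with
    | leaf t => have := (hl3 _ hamem).2; simp at this
    | node n c => exact ⟨n, rfl, rfl⟩
  obtain ⟨A, haroot, halab⟩ := hanode
  have hbroot : b.rootSym = Symbol.nonterminal A := by
    cases b with
    | leaf t => have := (hl3 _ hbmem).2; simp at this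
    | node n c =>
      simp only [label] at hfab halab
      rw [halab] at hfab
      simp [PT.rootSym, label] at hfab ⊢
      exact hfab.symm
  have hagood : Good g a := (hl3 a hamem).1
  have hbgood : Good g b := (hl3 b hbmem).1
  -- D2
  obtain ⟨v, x, hd2, hyd2⟩ := deriv_of_desc hRab hagood
  rw [haroot, hbroot] at hd2
  -- D3
  have hd3 := derives_yield hbgood
  rw [hbroot] at hd3
  -- D1
  have hd1 : ∃ u y : List T, g.Derives [Symbol.nonterminal g.initial]
      (u.map Symbol.terminal ++ [Symbol.nonterminal A] ++ y.map Symbol.terminal) ∧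
      (a = p0 ∨ Relation.TransGen (ChildOf (g := g)) a p0) := by
    rcases List.mem_cons.mp hamem with rfl | hal
    · refine ⟨[], [], ?_, Or.inl rfl⟩
      rw [← hp0root, ← haroot]
      simpa using Relation.ReflTransGen.refl
    · have hdesc : Relation.TransGen (ChildOf (g := g)) a p0 :=
        Relation.transGen_swap.mp ((List.pairwise_cons.mp hpw).1 a hal)
      obtain ⟨u, y, hder, _⟩ := deriv_of_desc hdesc hp0good
      rw [hp0root, haroot] at hder
      exact ⟨u, y, hder, Or.inr hdesc⟩
  obtain ⟨u, y, hd1, hcase⟩ := hd1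
  refine ⟨A, u, v, b.yield, x, y, hd1, hd2, hd3, ?_⟩
  -- nonemptiness via minimality
  by_contra hcon
  push_neg at hcon
  obtain ⟨rfl, rfl⟩ := hcon
  simp at hyd2
  have hsizelt : b.size < a.size := size_lt_of_desc hRab
  rcases hcase with rfl | hdesc
  · -- replace the root by b
    have := hminimal b hbgood (hbroot.trans (haroot.symm.trans hp0root))
      (hyd2 ▸ hp0yield)
    omega
  · obtain ⟨p', h1, h2, h3, h4⟩ := replace_desc hdesc hp0good b hbgood
      (hbroot.trans haroot.symm) hyd2.symm hsizelt
    have := hminimal p' h1 (h2.trans hp0root) (h3.trans hp0yield)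
    omega
lemma symbol_origin {s v : List (Symbol T g.NT)} (h : g.Derives s v) :
    ∀ x ∈ v, x ∈ s ∨ ∃ r ∈ g.rules, x ∈ r.output := by
  induction h with
  | refl => exact fun x hx => Or.inl hx
  | tail _ hp ih =>
    intro x hx
    obtain ⟨r, hr, hrw⟩ := hp
    obtain ⟨p, q, heq1, heq2⟩ := hrw.exists_parts
    subst heq1 heq2
    simp only [List.mem_append] at hx
    rcases hx with (hx | hx) | hx
    · exact ih x (by simp [hx])
    · exact Or.inr ⟨r, hr, hx⟩
    · exact ih x (by simp [hx])

/-- There are arbitrarily long words in an infinite CF language. -/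
lemma exists_long_word (hinf : Set.Infinite {w : List T | w ∈ g.language}) (n : ℕ) :
    ∃ w ∈ g.language, n < w.length := by
  classical
  by_contra hno
  push_neg at hno
  apply hinf
  set T0 : Finset T := g.rules.biUnion
    (fun r => (r.output.filterMap
      (fun s => match s with | .terminal t => some t | _ => none)).toFinset) with hT0
  have hmem : ∀ w ∈ g.language, ∀ a ∈ w, a ∈ T0 := by
    intro w hw a ha
    have h1 : Symbol.terminal a ∈ (w.map Symbol.terminal : List (Symbol T g.NT)) :=
      List.mem_map_of_mem ha
    rcases symbol_origin hw _ h1 with h2 | ⟨r, hr, hout⟩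
    · simp at h2
    · refine Finset.mem_biUnion.mpr ⟨r, hr, ?_⟩
      rw [List.mem_toFinset, List.mem_filterMap]
      exact ⟨Symbol.terminal a, hout, rfl⟩
  have hfin : Set.Finite ((fun l : List {x // x ∈ T0} => l.map Subtype.val) ''
      {l | l.length ≤ n}) :=
    (List.finite_length_le _ n).image _
  refine hfin.subset ?_
  intro w hw
  refine ⟨w.attach.map (fun a => ⟨a.1, hmem w hw a.1 a.2⟩), by simpa using hno w hw, ?_⟩
  simp [List.map_map]

end SqFreeCF

/-- The language of all square-free words over an alphabet with at least three letters,
assuming it is infinite, is not context-free. -/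
theorem stmt_17 (α : Type) (h3 : ∃ a b c : α, a ≠ b ∧ a ≠ c ∧ b ≠ c)
    (hinf : Set.Infinite
      ({w | ¬ ∃ (x p s : List α), x ≠ [] ∧ w = p ++ x ++ x ++ s} : Set (List α))) :
    ¬ Language.IsContextFree
      ({w | ¬ ∃ (x p s : List α), x ≠ [] ∧ w = p ++ x ++ x ++ s} : Language α) := by
  rintro ⟨g, hg⟩
  have hinf' : Set.Infinite {w : List α | w ∈ g.language} := by
    rw [show {w : List α | w ∈ g.language} = (g.language : Set (List α)) from rfl, hg]
    exact hinf
  obtain ⟨w, hw, hlen⟩ := SqFreeCF.exists_long_word hinf' (SqFreeCF.Mg g ^ g.rules.card)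
  obtain ⟨A, u, v, w', x, y, hd1, hd2, hd3, hvx⟩ := SqFreeCF.pump_exists hw hlen
  -- build the pumped word u ++ v ++ v ++ w' ++ x ++ x ++ y
  have e2 : g.Derives
      (u.map Symbol.terminal ++ [Symbol.nonterminal A] ++ y.map Symbol.terminal)
      ((u ++ v).map Symbol.terminal ++ [Symbol.nonterminal A] ++ (x ++ y).map Symbol.terminal) := by
    have := (hd2.append_left (u.map Symbol.terminal)).append_right (y.map Symbol.terminal)
    simpa [List.append_assoc] using this
  have e3 : g.Derives
      ((u ++ v).map Symbol.terminal ++ [Symbol.nonterminal A] ++ (x ++ y).map Symbol.terminal)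
      ((u ++ v ++ v).map Symbol.terminal ++ [Symbol.nonterminal A] ++
        (x ++ x ++ y).map Symbol.terminal) := by
    have := (hd2.append_left ((u ++ v).map Symbol.terminal)).append_right
      ((x ++ y).map Symbol.terminal)
    simpa [List.append_assoc] using this
  have e4 : g.Derives
      ((u ++ v ++ v).map Symbol.terminal ++ [Symbol.nonterminal A] ++
        (x ++ x ++ y).map Symbol.terminal)
      ((u ++ v ++ v ++ w' ++ x ++ x ++ y).map Symbol.terminal) := by
    have := (hd3.append_left ((u ++ v ++ v).map Symbol.terminal)).append_right
      ((x ++ x ++ y).map Symbol.terminal)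
    simpa [List.append_assoc] using this
  have hz : (u ++ v ++ v ++ w' ++ x ++ x ++ y) ∈ g.language :=
    (hd1.trans (e2.trans (e3.trans e4)))
  rw [hg] at hz
  rcases hvx with hv | hx
  · exact hz ⟨v, u, w' ++ x ++ x ++ y, hv, by simp [List.append_assoc]⟩
  · exact hz ⟨x, u ++ v ++ v ++ w', y, hx, by simp [List.append_assoc]⟩
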